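/- (Field of scalars, sequence model) Let ρ_n → 0 be a sequence of positive reals, and consider the quotient ring ℝ̃ = M/N of moderate real sequences by null real sequences along a nonprincipal ultrafilter U on ℕ, where a sequence is U-moderate if {n : |a_n| ≤ ρ_n^(−k)} ∈ U for some k, and U-null if {n : |a_n| ≤ ρ_n^k} ∈ U for every k. Then ℝ̃ is a field: every U-moderate, non-U-null sequence is invertible modulo U-null sequences. -/

import Mathlib

/-- A real sequence is U-moderate if for some `k` the set of indices where
`|a n| ≤ ρ_n^(-k)` belongs to the ultrafilter `U`. -/
def UModerate (U : Ultrafilter ℕ) (ρ : ℕ → ℝ) (a : ℕ → ℝ) : Prop :=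
  ∃ k : ℕ, {n | |a n| ≤ (ρ n ^ k)⁻¹} ∈ U

/-- A real sequence is U-null if for every `k` the set of indices where
`|a n| ≤ ρ_n^k` belongs to the ultrafilter `U`. -/
def UNull (U : Ultrafilter ℕ) (ρ : ℕ → ℝ) (a : ℕ → ℝ) : Prop :=
  ∀ k : ℕ, {n | |a n| ≤ ρ n ^ k} ∈ U

/-- Field of scalars (sequence model): every U-moderate, non-U-null sequence is
invertible modulo U-null sequences, so `ℝ̃ = M/N` is a field. -/
theorem umoderate_invertible_mod_unull (U : Ultrafilter ℕ)
    (hU : ∀ a : ℕ, (U : Filter ℕ) ≠ pure a)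
    (ρ : ℕ → ℝ) (hpos : ∀ n, 0 < ρ n)
    (hlim : Filter.Tendsto ρ Filter.atTop (nhds 0)) :
    ∀ a : ℕ → ℝ, UModerate U ρ a → ¬ UNull U ρ a →
      ∃ b : ℕ → ℝ, UModerate U ρ b ∧ UNull U ρ (fun n => a n * b n - 1) := by
  intro a _ hnn
  rw [UNull] at hnn
  push_neg at hnn
  obtain ⟨k₀, hk₀⟩ := hnn
  have hS : {n | ρ n ^ k₀ < |a n|} ∈ U := by
    have := (Ultrafilter.compl_mem_iff_notMem (s := {n | |a n| ≤ ρ n ^ k₀})).2 hk₀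
    convert this using 1
    ext n; simp [not_le]
  refine ⟨fun n => (a n)⁻¹, ⟨k₀, ?_⟩, fun k => ?_⟩
  · filter_upwards [hS] with n hn
    have h0 : 0 < ρ n ^ k₀ := pow_pos (hpos n) _
    have ha : 0 < |a n| := lt_trans h0 hn
    simpa [abs_inv] using inv_anti₀ h0 hn.le
  · filter_upwards [hS] with n hn
    have h0 : 0 < ρ n ^ k₀ := pow_pos (hpos n) _
    have ha : a n ≠ 0 := by
      intro h; simp [h] at hn; exact absurd hn (not_lt.2 h0.le)
    have : a n * (a n)⁻¹ - 1 = 0 := by field_simp; ring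
    simp only [Set.mem_setOf_eq, this, abs_zero]
    exact (pow_pos (hpos n) k).le
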